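/- Fix N ≥ 1, r ≥ 1, and an N-periodic family of real matrices A_k ∈ ℝ^{n×n}, B_k ∈ ℝ^{n×m}, C_k ∈ ℝ^{m×n}, with cycled matrices Ǎ, B̌, Č. Define Φ(j,i) := A_{j−1}···A_i for j > i, Φ(i,i) := I, and M_k^{(j)} := C_{k+j} Φ(k+j, k+1) B_k for j ≥ 1 (indices mod N). Assume M_k^{(j)} = 0 for all k and all j with 1 ≤ j ≤ r−1, and that M_k^{(r)} is invertible for every k. Define Γ_k := A_k − B_k (M_k^{(r)})⁻¹ C_{k+r} Φ(k+r, k) and Φ_inv := Γ_{N−1} Γ_{N−2} ··· Γ_0. Then ρ(Φ_inv) < 1 if and only if ρ(Ǎ − B̌ (Č Ǎ^{r−1} B̌)⁻¹ Č Ǎ^r) < 1, where ρ denotes the spectral radius. -/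

import Mathlib

open Matrix
open scoped ENNReal NNReal

/-- Spectral radius of a real square matrix: the spectral radius (max |λ| over complex
eigenvalues) of the matrix viewed as a complex matrix. -/
noncomputable def specRad {ι : Type} [Fintype ι] [DecidableEq ι] (M : Matrix ι ι ℝ) : ℝ≥0∞ :=
  spectralRadius ℂ (M.map Complex.ofReal)

/-- The cycled (1-shift block-circulant) matrix: the (i,j) block equals `M j` if
`i = (j+1) mod N` and `0` otherwise. -/
def cyc (N : ℕ) {n m : ℕ} (M : ℕ → Matrix (Fin n) (Fin m) ℝ) :
    Matrix (Fin N × Fin n) (Fin N × Fin m) ℝ :=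
  fun p q => if (p.1 : ℕ) = ((q.1 : ℕ) + 1) % N then M (q.1 : ℕ) p.2 q.2 else 0

/-- Block-diagonal matrix `diag (M 0, …, M (N-1))`. -/
def bdiag (N : ℕ) {p n : ℕ} (M : ℕ → Matrix (Fin p) (Fin n) ℝ) :
    Matrix (Fin N × Fin p) (Fin N × Fin n) ℝ :=
  fun q r => if q.1 = r.1 then M (q.1 : ℕ) q.2 r.2 else 0

/-- The descending product `A (N-1) * A (N-2) * ⋯ * A 0` (monodromy-type product). -/
def prodDesc {n : ℕ} (A : ℕ → Matrix (Fin n) (Fin n) ℝ) (N : ℕ) : Matrix (Fin n) (Fin n) ℝ :=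
  ((List.range N).reverse.map A).prod

/-- State transition product `Φ(j,i) = A (j-1) * ⋯ * A i` for `j > i`, and `Φ(i,i) = 1`. -/
def stp {n : ℕ} (A : ℕ → Matrix (Fin n) (Fin n) ℝ) (j i : ℕ) : Matrix (Fin n) (Fin n) ℝ :=
  ((List.range' i (j - i)).reverse.map A).prod

/-- Periodic Markov parameter `M_k^{(j)} = C (k+j) * Φ(k+j, k+1) * B k`. -/
def markov {n m p : ℕ} (A : ℕ → Matrix (Fin n) (Fin n) ℝ) (B : ℕ → Matrix (Fin n) (Fin m) ℝ)
    (C : ℕ → Matrix (Fin p) (Fin n) ℝ) (k j : ℕ) : Matrix (Fin p) (Fin m) ℝ :=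
  C (k + j) * stp A (k + j) (k + 1) * B k

/-- Kronecker product `e_i ⊗ w` of the `(i+1)`-th standard unit vector of `ℝ^N` with `w`. -/
def kron {N q : ℕ} (i : Fin N) (w : Fin q → ℝ) : Fin N × Fin q → ℝ :=
  fun p => if p.1 = i then w p.2 else 0

/-- The residue `k mod N` as an element of `Fin N`. -/
def finMod (N : ℕ) (hN : 0 < N) (k : ℕ) : Fin N := ⟨k % N, Nat.mod_lt _ hN⟩


section SBlock
variable {α : Type} [CommRing α] {N n m p : ℕ}

/-- shifted block matrix -/
def sblock (N t : ℕ) {n m : ℕ} {α : Type} [CommRing α] (M : ℕ → Matrix (Fin n) (Fin m) α) :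
    Matrix (Fin N × Fin n) (Fin N × Fin m) α :=
  fun p q => if (p.1 : ℕ) = ((q.1 : ℕ) + t) % N then M (q.1 : ℕ) p.2 q.2 else 0

lemma sblock_ext {t : ℕ} {M L : ℕ → Matrix (Fin n) (Fin m) α} (h : ∀ k < N, M k = L k) :
    sblock N t M = sblock N t L := by
  funext pq rs
  simp only [sblock]
  split
  · rw [h _ rs.1.2]
  · rfl

lemma sblock_congr {s t : ℕ} (h : s % N = t % N) (M : ℕ → Matrix (Fin n) (Fin m) α) :
    sblock N s M = sblock N t M := by
  funext pq rs
  simp only [sblock]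
  have : ((rs.1 : ℕ) + s) % N = ((rs.1 : ℕ) + t) % N := by
    conv_lhs => rw [← Nat.mod_add_mod, Nat.add_comm, ← Nat.mod_add_mod, h,
      Nat.mod_add_mod, Nat.add_comm, Nat.mod_add_mod]
  rw [this]

lemma sblock_sub {t : ℕ} (M L : ℕ → Matrix (Fin n) (Fin m) α) :
    sblock N t M - sblock N t L = sblock N t (fun k => M k - L k) := by
  funext pq rs
  simp only [Matrix.sub_apply, sblock]
  split <;> simp [Matrix.sub_apply]

lemma sblock_one (hN : 0 < N) :
    sblock N 0 (fun _ => (1 : Matrix (Fin n) (Fin n) α)) = 1 := by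
  funext pq rs
  obtain ⟨i, x⟩ := pq; obtain ⟨j, z⟩ := rs
  simp only [sblock, Nat.add_zero, Nat.mod_eq_of_lt j.2, Matrix.one_apply, Prod.mk.injEq]
  by_cases h : (i : ℕ) = (j : ℕ)
  · have : i = j := Fin.ext h
    subst this
    simp [Matrix.one_apply]
  · have : ¬ i = j := fun hh => h (by rw [hh])
    simp [h, this]

lemma sblock_mul (hN : 0 < N) (s t : ℕ)
    (M : ℕ → Matrix (Fin n) (Fin m) α) (L : ℕ → Matrix (Fin m) (Fin p) α) :
    sblock N s M * sblock N t L = sblock N (s + t) (fun k => M ((k + t) % N) * L k) := by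
  funext pq rs
  obtain ⟨i, x⟩ := pq; obtain ⟨j, z⟩ := rs
  have hjt : ((j : ℕ) + t) % N < N := Nat.mod_lt _ hN
  set l₀ : Fin N := ⟨((j:ℕ) + t) % N, hjt⟩ with hl₀
  have main : (sblock N s M * sblock N t L) (i,x) (j,z)
      = ∑ y, (if (i:ℕ) = ((l₀:ℕ) + s) % N then M (l₀:ℕ) x y else 0) * L (j:ℕ) y z := by
    rw [Matrix.mul_apply, Fintype.sum_prod_type]
    rw [Finset.sum_eq_single l₀]
    · exact Finset.sum_congr rfl fun y _ => by simp [sblock, hl₀]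
    · intro l _ hl
      apply Finset.sum_eq_zero; intro y _
      have hne : ¬ ((l:ℕ) = ((j:ℕ) + t) % N) := fun h => hl (Fin.ext h)
      simp [sblock, hne]
    · intro h; exact absurd (Finset.mem_univ _) h
  have he : ((l₀:ℕ) + s) % N = ((j:ℕ) + (s + t)) % N := by
    simp only [hl₀]
    rw [Nat.mod_add_mod]
    exact congrArg (· % N) (by omega)
  rw [main, he]
  simp only [sblock, Matrix.mul_apply]
  by_cases hcond : (i:ℕ) = ((j:ℕ) + (s + t)) % N
  · simp [hcond, hl₀]
  · simp [hcond]

lemma mod_cancel (hN : 0 < N) {a : ℕ} (ha : a < N) (t : ℕ) :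
    ((a + t) % N + (N - t % N)) % N = a := by
  have h1 : t % N < N := Nat.mod_lt _ hN
  have h2 := Nat.div_add_mod t N
  rw [Nat.mod_add_mod]
  have : a + t + (N - t % N) = a + N * (t / N + 1) := by
    rw [Nat.mul_add, Nat.mul_one]; omega
  rw [this, Nat.add_mul_mod_self_left, Nat.mod_eq_of_lt ha]

lemma sblock_mulVec (hN : 0 < N) {t : ℕ} (M : ℕ → Matrix (Fin n) (Fin n) α)
    (u : Fin N × Fin n → α) (i : Fin N) (x : Fin n) (l : Fin N)
    (hl : ((l : ℕ) + t) % N = (i : ℕ)) :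
    (sblock N t M *ᵥ u) (i, x) = (M (l : ℕ) *ᵥ fun y => u (l, y)) x := by
  rw [Matrix.mulVec, dotProduct, Fintype.sum_prod_type]
  rw [Finset.sum_eq_single l]
  · rw [Matrix.mulVec, dotProduct]
    exact Finset.sum_congr rfl fun y _ => by simp [sblock, hl]
  · intro l' _ hl'
    apply Finset.sum_eq_zero; intro y _
    have hne : ¬ ((i:ℕ) = ((l':ℕ) + t) % N) := by
      intro h
      apply hl'
      apply Fin.ext
      have e1 : (((l':ℕ) + t) % N + (N - t % N)) % N = (l' : ℕ) := mod_cancel hN l'.2 t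
      have e2 : (((l:ℕ) + t) % N + (N - t % N)) % N = (l : ℕ) := mod_cancel hN l.2 t
      rw [← e1, ← e2, ← h, hl]
    simp [sblock, hne]
  · intro h; exact absurd (Finset.mem_univ _) h

end SBlock

def stpG {α : Type} [CommRing α] {n : ℕ} (A : ℕ → Matrix (Fin n) (Fin n) α) (j i : ℕ) :
    Matrix (Fin n) (Fin n) α :=
  ((List.range' i (j - i)).reverse.map A).prod

section STP
variable {α : Type} [CommRing α] {N n : ℕ} (A : ℕ → Matrix (Fin n) (Fin n) α)

lemma stpG_self (a : ℕ) : stpG A a a = 1 := by simp [stpG]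

lemma stpG_succ_left {a a' : ℕ} (h : a' ≤ a) :
    stpG A (a + 1) a' = A a * stpG A a a' := by
  have e : a + 1 - a' = (a - a') + 1 := by omega
  rw [stpG, e, List.range'_1_concat]
  have e2 : a' + (a - a') = a := by omega
  rw [e2, List.reverse_append, List.reverse_singleton, List.map_append, List.prod_append]
  simp [stpG]

lemma stpG_mul {a b c : ℕ} (h1 : a ≤ b) (h2 : b ≤ c) :
    stpG A c b * stpG A b a = stpG A c a := by
  have key : List.range' a (b - a) ++ List.range' b (c - b) = List.range' a (c - a) := by
    have := List.range'_append_1 (s := a) (m := b - a) (n := c - b)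
    rw [show a + (b - a) = b from by omega, show b - a + (c - b) = c - a from by omega] at this
    exact this
  rw [stpG, stpG, stpG, ← key, List.reverse_append, List.map_append, List.prod_append]

lemma stpG_mod (hA : ∀ k, A k = A (k % N)) (a t : ℕ) :
    stpG A (a % N + t) (a % N) = stpG A (a + t) a := by
  induction t with
  | zero => simp only [Nat.add_zero]; rw [stpG_self, stpG_self]
  | succ t ih =>
    rw [show a % N + (t + 1) = (a % N + t) + 1 from by omega,
      show a + (t + 1) = (a + t) + 1 from by omega,
      stpG_succ_left A (by omega : a % N ≤ a % N + t),
      stpG_succ_left A (by omega : a ≤ a + t), ih]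
    congr 1
    rw [hA (a % N + t), Nat.mod_add_mod, ← hA (a + t)]

lemma stpG_shift (hA : ∀ k, A k = A (k % N)) {a b : ℕ} (h : a % N = b % N) (t : ℕ) :
    stpG A (a + t) a = stpG A (b + t) b := by
  rw [← stpG_mod A hA a t, h, stpG_mod A hA b t]

lemma stpG_one (a : ℕ) : stpG A (a + 1) a = A a := by
  rw [stpG_succ_left A (le_refl a), stpG_self, mul_one]

lemma sblock_pow (hN : 0 < N) (hA : ∀ k, A k = A (k % N)) (t : ℕ) :
    (sblock N 1 A) ^ t = sblock N t (fun k => stpG A (k + t) k) := by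
  induction t with
  | zero =>
    rw [pow_zero, ← sblock_one (n := n) (α := α) hN]
    exact (sblock_ext fun k _ => by rw [Nat.add_zero, stpG_self]).symm
  | succ t ih =>
    rw [pow_succ, ih, sblock_mul hN t 1]
    apply sblock_ext
    intro k hk
    have e1 : stpG A ((k + 1) % N + t) ((k + 1) % N) = stpG A (k + 1 + t) (k + 1) :=
      stpG_shift A hA (Nat.mod_mod_of_dvd (k+1) dvd_rfl) t
    rw [e1, ← stpG_one A k, stpG_mul A (by omega) (by omega),
      show k + 1 + t = k + (t + 1) from by omega]

end STP
open Matrix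
open scoped ENNReal NNReal

section Spec
variable {ι : Type} [Fintype ι] [DecidableEq ι]

lemma mem_spec_iff (M : Matrix ι ι ℂ) (z : ℂ) :
    z ∈ spectrum ℂ M ↔ ∃ v, v ≠ 0 ∧ M *ᵥ v = z • v := by
  rw [spectrum.mem_iff]
  have e : (algebraMap ℂ (Matrix ι ι ℂ)) z - M = z • (1 : Matrix ι ι ℂ) - M := by
    rw [Algebra.algebraMap_eq_smul_one]
  rw [e, Matrix.isUnit_iff_isUnit_det, isUnit_iff_ne_zero, not_not,
    ← Matrix.exists_mulVec_eq_zero_iff]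
  constructor
  · rintro ⟨v, hv, hMv⟩
    refine ⟨v, hv, ?_⟩
    rw [Matrix.sub_mulVec, Matrix.smul_mulVec, Matrix.one_mulVec, sub_eq_zero] at hMv
    exact hMv.symm
  · rintro ⟨v, hv, hMv⟩
    refine ⟨v, hv, ?_⟩
    rw [Matrix.sub_mulVec, Matrix.smul_mulVec, Matrix.one_mulVec, sub_eq_zero, hMv]

lemma specRadius_lt_one_iff (M : Matrix ι ι ℂ) :
    spectralRadius ℂ M < 1 ↔ ∀ z ∈ spectrum ℂ M, ‖z‖₊ < 1 := by
  have hfin := M.finite_spectrum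
  have e : spectralRadius ℂ M = hfin.toFinset.sup (fun z => (‖z‖₊ : ℝ≥0∞)) := by
    rw [Finset.sup_eq_iSup, spectralRadius]
    apply le_antisymm
    · exact iSup₂_le fun z hz => le_iSup₂_of_le z (hfin.mem_toFinset.mpr hz) le_rfl
    · exact iSup₂_le fun z hz => le_iSup₂_of_le z (hfin.mem_toFinset.mp hz) le_rfl
  rw [e, Finset.sup_lt_iff (by simp : (⊥ : ℝ≥0∞) < 1)]
  constructor
  · intro h z hz
    exact ENNReal.coe_lt_one_iff.mp (h z (hfin.mem_toFinset.mpr hz))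
  · intro h z hz
    exact ENNReal.coe_lt_one_iff.mpr (h z (hfin.mem_toFinset.mp hz))

lemma pow_mulVec (M : Matrix ι ι ℂ) (v : ι → ℂ) (z : ℂ) (h : M *ᵥ v = z • v) (t : ℕ) :
    M ^ t *ᵥ v = z ^ t • v := by
  induction t with
  | zero => simp
  | succ t ih =>
    rw [pow_succ, ← Matrix.mulVec_mulVec, h, Matrix.mulVec_smul, ih, smul_smul, pow_succ,
      mul_comm]

lemma eig_transfer (X Y : Matrix ι ι ℂ) (μ : ℂ) (hμ : μ ≠ 0)
    (h : μ ∈ spectrum ℂ (Y * X)) : μ ∈ spectrum ℂ (X * Y) := by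
  rw [mem_spec_iff] at h ⊢
  obtain ⟨v, hv, hYX⟩ := h
  refine ⟨X *ᵥ v, ?_, ?_⟩
  · intro h0
    apply hv
    have : Y *ᵥ (X *ᵥ v) = μ • v := by rw [Matrix.mulVec_mulVec, hYX]
    rw [h0, Matrix.mulVec_zero] at this
    have := this.symm
    rw [smul_eq_zero] at this
    exact this.resolve_left hμ
  · rw [← Matrix.mulVec_mulVec, Matrix.mulVec_mulVec v Y X, hYX, Matrix.mulVec_smul]

end Spec

lemma key_complex {N n : ℕ} (hN : 0 < N) (G : ℕ → Matrix (Fin n) (Fin n) ℂ)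
    (hG : ∀ k, G k = G (k % N)) :
    spectralRadius ℂ (stpG G N 0) < 1 ↔ spectralRadius ℂ (sblock N 1 G) < 1 := by
  rw [specRadius_lt_one_iff, specRadius_lt_one_iff]
  constructor
  · intro hP z hz
    by_contra hge
    push_neg at hge
    obtain ⟨u, hu, hSu⟩ := (mem_spec_iff _ z).mp hz
    have hz0 : z ≠ 0 := by
      intro h0; rw [h0] at hge; simp at hge
    have hpow : (sblock N 1 G) ^ N *ᵥ u = z ^ N • u := pow_mulVec _ _ _ hSu N
    rw [sblock_pow G hN hG N] at hpow
    obtain ⟨⟨k, y⟩, hky⟩ := Function.ne_iff.mp hu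
    set v : Fin n → ℂ := fun y => u (k, y) with hv
    have hvec : stpG G ((k:ℕ) + N) (k:ℕ) *ᵥ v = z ^ N • v := by
      funext x
      have hmv := sblock_mulVec hN (fun j => stpG G (j + N) j) u k x k
        (by rw [Nat.add_mod_right, Nat.mod_eq_of_lt k.2])
      calc (stpG G ((k:ℕ) + N) (k:ℕ) *ᵥ v) x
          = (sblock N N (fun j => stpG G (j + N) j) *ᵥ u) (k, x) := hmv.symm
        _ = (z ^ N • u) (k, x) := by rw [hpow]
        _ = (z ^ N • v) x := rfl
    have hsplit : stpG G ((k:ℕ) + N) (k:ℕ) = stpG G (k:ℕ) 0 * stpG G N (k:ℕ) := by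
      have h1 : stpG G (N + (k:ℕ)) N = stpG G (k:ℕ) 0 := by
        have h2 := stpG_mod G hG N (k:ℕ)
        rw [Nat.mod_self, Nat.zero_add] at h2
        exact h2.symm
      rw [show (k:ℕ) + N = N + (k:ℕ) from by omega, ← h1]
      exact (stpG_mul G (le_of_lt k.2) (by omega)).symm
    have hmem : z ^ N ∈ spectrum ℂ (stpG G N (k:ℕ) * stpG G (k:ℕ) 0) := by
      apply eig_transfer _ _ _ (pow_ne_zero _ hz0)
      rw [mem_spec_iff]
      exact ⟨v, fun h0 => hky (congrFun h0 y), by rw [← hsplit]; exact hvec⟩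
    rw [stpG_mul G (Nat.zero_le _) (le_of_lt k.2)] at hmem
    have hlt := hP _ hmem
    rw [nnnorm_pow] at hlt
    have hone : (1 : ℝ≥0) ≤ ‖z‖₊ ^ N := one_le_pow_of_one_le' hge N
    exact absurd hlt (not_lt.mpr hone)
  · intro hS z hz
    by_contra hge
    push_neg at hge
    obtain ⟨v, hv, hPv⟩ := (mem_spec_iff _ z).mp hz
    have hz0 : z ≠ 0 := by
      intro h0; rw [h0] at hge; simp at hge
    obtain ⟨w, hw⟩ := IsAlgClosed.exists_pow_nat_eq z hN
    have hw0 : w ≠ 0 := by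
      rintro rfl; rw [zero_pow (by omega)] at hw; exact hz0 hw.symm
    have hwge : (1 : ℝ≥0) ≤ ‖w‖₊ := by
      by_contra hlt
      push_neg at hlt
      have hp : ‖w‖₊ ^ N < 1 := pow_lt_one₀ (zero_le (a := ‖w‖₊)) hlt (by omega)
      rw [← nnnorm_pow, hw] at hp
      exact absurd hp (not_lt.mpr hge)
    set u : Fin N × Fin n → ℂ := fun p => w⁻¹ ^ (p.1 : ℕ) * ((stpG G (p.1 : ℕ) 0 *ᵥ v) p.2)
      with hu
    have hu0 : u ≠ 0 := by
      obtain ⟨y₀, hy₀⟩ := Function.ne_iff.mp hv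
      intro h0
      apply hy₀
      have := congrFun h0 (⟨0, hN⟩, y₀)
      simpa [hu, stpG_self, Matrix.one_mulVec] using this
    have hSu : sblock N 1 G *ᵥ u = w • u := by
      funext p
      obtain ⟨i, x⟩ := p
      set lv : ℕ := ((i:ℕ) + (N - 1)) % N with hlv
      have hlvN : lv < N := Nat.mod_lt _ hN
      have hcond : (((⟨lv, hlvN⟩ : Fin N) : ℕ) + 1) % N = (i : ℕ) := by
        show (lv + 1) % N = (i : ℕ)
        rw [hlv, Nat.mod_add_mod, show (i:ℕ) + (N-1) + 1 = (i:ℕ) + N from by omega,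
          Nat.add_mod_right, Nat.mod_eq_of_lt i.2]
      have hmv := sblock_mulVec hN G u i x ⟨lv, hlvN⟩ hcond
      have hfun : (fun y => u (⟨lv, hlvN⟩, y)) = w⁻¹ ^ lv • (stpG G lv 0 *ᵥ v) := by
        funext y; simp [hu, smul_eq_mul]
    -- continue
      rw [hmv, hfun, Matrix.mulVec_smul, Matrix.mulVec_mulVec,
        ← stpG_succ_left G (Nat.zero_le _)]
      by_cases hi : (i:ℕ) = 0
      · have hlveq : lv = N - 1 := by
          rw [hlv, hi, Nat.zero_add, Nat.mod_eq_of_lt (by omega)]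
        have huix : u (i, x) = v x := by
          simp [hu, hi, stpG_self, Matrix.one_mulVec]
        have e2 : stpG G (lv + 1) 0 = stpG G N 0 := by
          rw [hlveq, show N - 1 + 1 = N from by omega]
        rw [e2, hPv]
        show w⁻¹ ^ lv * ((z • v) x) = (w • u) (i, x)
        have hkey : w⁻¹ ^ (N - 1) * w ^ N = w := by
          have hN1 : w ^ N = w ^ (N - 1) * w := by rw [← pow_succ]; congr 1; omega
          rw [hN1, inv_pow, ← mul_assoc, inv_mul_cancel₀ (pow_ne_zero _ hw0), one_mul]
        simp only [Pi.smul_apply, smul_eq_mul, huix, hlveq]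
        rw [← hw, ← mul_assoc, hkey]
      · have hlveq : lv = (i:ℕ) - 1 := by
          rw [hlv, show (i:ℕ) + (N-1) = ((i:ℕ) - 1) + N from by omega,
            Nat.add_mod_right, Nat.mod_eq_of_lt (by omega)]
        have e2 : lv + 1 = (i : ℕ) := by omega
        show w⁻¹ ^ lv * ((stpG G (lv + 1) 0 *ᵥ v) x) = (w • u) (i, x)
        simp only [Pi.smul_apply, smul_eq_mul, hu, e2]
        have hkey : w * w⁻¹ ^ (i:ℕ) = w⁻¹ ^ ((i:ℕ) - 1) := by
          have e3 : w⁻¹ ^ (i:ℕ) = w⁻¹ ^ ((i:ℕ) - 1) * w⁻¹ := by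
            rw [← pow_succ]; congr 1; omega
          rw [e3, ← mul_assoc, mul_comm w (w⁻¹ ^ ((i:ℕ) - 1)), mul_assoc,
            mul_inv_cancel₀ hw0, mul_one]
        rw [← mul_assoc, hkey, hlveq]
    have hmem : w ∈ spectrum ℂ (sblock N 1 G) := (mem_spec_iff _ w).mpr ⟨u, hu0, hSu⟩
    exact absurd (hS _ hmem) (not_lt.mpr hwge)

lemma map_stpG {n : ℕ} (A : ℕ → Matrix (Fin n) (Fin n) ℝ) (j i : ℕ) :
    (stpG A j i).map Complex.ofReal = stpG (fun k => (A k).map Complex.ofReal) j i := by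
  rw [stpG, stpG, show ((List.range' i (j - i)).reverse.map A).prod.map Complex.ofReal
      = Complex.ofRealHom.mapMatrix ((List.range' i (j - i)).reverse.map A).prod from rfl,
    map_list_prod]
  rw [List.map_map]
  rfl

lemma map_cyc {N n : ℕ} (Γ : ℕ → Matrix (Fin n) (Fin n) ℝ) :
    (cyc N Γ).map Complex.ofReal = sblock N 1 (fun k => (Γ k).map Complex.ofReal) := by
  funext p q
  simp only [cyc, sblock, Matrix.map_apply]
  split <;> simp

lemma realKey {N n : ℕ} (hN : 0 < N) (Γ : ℕ → Matrix (Fin n) (Fin n) ℝ)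
    (hΓ : ∀ k, Γ k = Γ (k % N)) :
    specRad (prodDesc Γ N) < 1 ↔ specRad (cyc N Γ) < 1 := by
  have hpd : prodDesc Γ N = stpG Γ N 0 := by
    simp [prodDesc, stpG, List.range_eq_range']
  set G : ℕ → Matrix (Fin n) (Fin n) ℂ := fun k => (Γ k).map Complex.ofReal with hGdef
  have hG : ∀ k, G k = G (k % N) := by
    intro k
    simp only [hGdef]
    rw [← hΓ k]
  have e1 : (prodDesc Γ N).map Complex.ofReal = stpG G N 0 := by
    rw [hpd, map_stpG]
  have e2 : (cyc N Γ).map Complex.ofReal = sblock N 1 G := map_cyc Γ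
  rw [specRad, specRad, e1, e2]
  exact key_complex hN G hG
/-- **Statement 19.** (Corollary, higher relative degree stability.) With
`Γ_k = A_k - B_k (M_k^{(r)})⁻¹ C_{k+r} Φ(k+r, k)` and `Φ_inv = Γ_{N-1} ⋯ Γ_0`,
`ρ(Φ_inv) < 1 ↔ ρ(Ǎ - B̌ (Č Ǎ^(r-1) B̌)⁻¹ Č Ǎ^r) < 1`. -/
theorem specRad_monodromy_iff_cycled_relative_degree_r {n m N : ℕ} (hN : 1 ≤ N)
    (A : ℕ → Matrix (Fin n) (Fin n) ℝ) (B : ℕ → Matrix (Fin n) (Fin m) ℝ)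
    (C : ℕ → Matrix (Fin m) (Fin n) ℝ) (r : ℕ) (hr : 1 ≤ r)
    (hA : ∀ k, A k = A (k % N)) (hB : ∀ k, B k = B (k % N))
    (hC : ∀ k, C k = C (k % N))
    (hM : ∀ k j : ℕ, 1 ≤ j → j < r → markov A B C k j = 0)
    (hMinv : ∀ k, IsUnit (markov A B C k r).det) :
    specRad (prodDesc (fun k =>
        A k - B k * (markov A B C k r)⁻¹ * (C (k + r) * stp A (k + r) k)) N) < 1 ↔
      specRad (cyc N A - cyc N B * (bdiag N C * cyc N A ^ (r - 1) * cyc N B)⁻¹ *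
        (bdiag N C * cyc N A ^ r)) < 1 := by
  have hN0 : 0 < N := hN
  set Γ : ℕ → Matrix (Fin n) (Fin n) ℝ := fun k =>
    A k - B k * (markov A B C k r)⁻¹ * (C (k + r) * stp A (k + r) k) with hΓdef
  set Mk : ℕ → Matrix (Fin m) (Fin m) ℝ := fun k => markov A B C k r with hMkdef
  set s : ℕ := N - r % N with hsdef
  have hstp : ∀ (X : ℕ → Matrix (Fin n) (Fin n) ℝ) j i, stp X j i = stpG X j i :=
    fun _ _ _ => rfl
  -- periodicity of markov parameters
  have hMper : ∀ k, Mk k = Mk (k % N) := by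
    intro k
    have ec : C (k % N + r) = C (k + r) := by
      rw [hC (k % N + r), Nat.mod_add_mod, ← hC (k + r)]
    have es : stp A (k % N + r) (k % N + 1) = stp A (k + r) (k + 1) := by
      rw [hstp, hstp, show k % N + r = (k % N + 1) + (r - 1) from by omega,
        show k + r = (k + 1) + (r - 1) from by omega]
      exact stpG_shift A hA (Nat.mod_add_mod k N 1) (r - 1)
    simp only [hMkdef, markov]
    rw [ec, es, ← hB k]
  -- periodicity of Γ
  have hΓper : ∀ k, Γ k = Γ (k % N) := by
    intro k
    have ec : C (k % N + r) = C (k + r) := by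
      rw [hC (k % N + r), Nat.mod_add_mod, ← hC (k + r)]
    have es : stp A (k % N + r) (k % N) = stp A (k + r) k := by
      rw [hstp, hstp]
      exact stpG_shift A hA (Nat.mod_mod_of_dvd k dvd_rfl) r
    have em : markov A B C (k % N) r = markov A B C k r := by
      have h6 := (hMper k).symm
      simpa only [hMkdef] using h6
    simp only [hΓdef]
    rw [ec, es, ← hB k, ← hA k, em]
  -- block identities
  have ebd : bdiag N C = sblock N 0 C := by
    funext p q
    by_cases h : (p.1 : ℕ) = (q.1 : ℕ)
    · simp [bdiag, sblock, Fin.ext_iff, h, Nat.mod_eq_of_lt q.1.2]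
    · simp [bdiag, sblock, Fin.ext_iff, h, Nat.mod_eq_of_lt q.1.2]
  have epow : ∀ t, cyc N A ^ t = sblock N t (fun k => stpG A (k + t) k) := by
    intro t
    rw [show cyc N A = sblock N 1 A from rfl]
    exact sblock_pow A hN0 hA t
  have eX : bdiag N C * cyc N A ^ (r - 1) * cyc N B = sblock N r Mk := by
    rw [ebd, epow (r - 1), show cyc N B = sblock N 1 B from rfl,
      sblock_mul hN0 0 (r - 1) C _, sblock_mul hN0 (0 + (r - 1)) 1 _ B,
      show (0 + (r - 1)) + 1 = r from by omega]
    apply sblock_ext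
    intro k hk
    have ec : C (((k + 1) % N + (r - 1)) % N) = C (k + r) := by
      rw [Nat.mod_add_mod, show k + 1 + (r - 1) = k + r from by omega, ← hC (k + r)]
    have es : stpG A ((k + 1) % N + (r - 1)) ((k + 1) % N) = stpG A (k + r) (k + 1) := by
      rw [stpG_shift A hA (Nat.mod_mod_of_dvd (k + 1) dvd_rfl) (r - 1),
        show k + 1 + (r - 1) = k + r from by omega]
    rw [ec, es, hMkdef]
    simp only [markov, hstp]
  have eXinv : (sblock N r Mk)⁻¹ = sblock N s (fun j => (Mk ((j + s) % N))⁻¹) := by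
    apply Matrix.inv_eq_left_inv
    rw [sblock_mul hN0 s r _ Mk]
    have hsr : (s + r) % N = 0 % N := by
      have h2 := Nat.div_add_mod r N
      have h3 : r % N < N := Nat.mod_lt _ hN0
      have e : s + r = N + N * (r / N) := by omega
      rw [e, Nat.add_mul_mod_self_left, Nat.mod_self, Nat.zero_mod]
    rw [sblock_congr hsr]
    have e5 : sblock N 0 (fun k => (fun j => (Mk ((j + s) % N))⁻¹) ((k + r) % N) * Mk k)
        = sblock N 0 (fun _ => (1 : Matrix (Fin m) (Fin m) ℝ)) := by
      apply sblock_ext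
      intro k hk
      simp only []
      rw [mod_cancel hN0 hk r]
      exact Matrix.nonsing_inv_mul _ (hMinv k)
    rw [e5, sblock_one hN0]
  have eCAr : bdiag N C * cyc N A ^ r = sblock N r (fun k => C (k + r) * stpG A (k + r) k) := by
    rw [ebd, epow r, sblock_mul hN0 0 r C _, show 0 + r = r from by omega]
    apply sblock_ext
    intro k hk
    congr 1
    exact (hC (k + r)).symm
  have eBig : cyc N B * (bdiag N C * cyc N A ^ (r - 1) * cyc N B)⁻¹ * (bdiag N C * cyc N A ^ r)
      = sblock N 1 (fun k => B k * (Mk k)⁻¹ * (C (k + r) * stpG A (k + r) k)) := by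
    rw [eX, eXinv, eCAr, show cyc N B = sblock N 1 B from rfl,
      sblock_mul hN0 1 s B _, sblock_mul hN0 (1 + s) r _ _]
    have h1sr : (1 + s + r) % N = 1 % N := by
      have h2 := Nat.div_add_mod r N
      have h3 : r % N < N := Nat.mod_lt _ hN0
      have e : 1 + s + r = (1 + N) + N * (r / N) := by omega
      rw [e, Nat.add_mul_mod_self_left, Nat.add_mod_right]
    rw [sblock_congr h1sr]
    apply sblock_ext
    intro k hk
    rw [mod_cancel hN0 hk r]
  have efinal : cyc N A - cyc N B * (bdiag N C * cyc N A ^ (r - 1) * cyc N B)⁻¹ *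
      (bdiag N C * cyc N A ^ r) = cyc N Γ := by
    rw [eBig, show cyc N A = sblock N 1 A from rfl, sblock_sub]
    rfl
  rw [efinal]
  exact realKey hN0 Γ hΓper
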